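/- arXiv:1511.00899 — 4 statements merged into one kernel-verified Lean document; each statement's English description precedes it below -/
import Mathlib

section
/- Suppose the Neumann problem u''+a·u=σ, u'(0)=u'(T)=0 on [0,T] and the periodic problem v''+ã·v=σ̃, v(0)=v(2T), v'(0)=v'(2T) on [0,2T] (with ã the even extension of a about t=T) are both uniquely solvable for every L¹ right-hand side, with Green's functions G_N and G_P respectively. Then G_N(t,s) = G_P(t,s) + G_P(t, 2T−s) for all (t,s) ∈ [0,T]×[0,T]. -/
open Set MeasureTheory intervalIntegral

noncomputable def evenExt (T : ℝ) (f : ℝ → ℝ) : ℝ → ℝ :=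
  fun t => if t ≤ T then f t else f (2 * T - t)

noncomputable def oddExt (T : ℝ) (f : ℝ → ℝ) : ℝ → ℝ :=
  fun t => if t ≤ T then f t else -f (2 * T - t)

/-- `u` is a Carathéodory (W^{2,1}) solution of `u'' + a u = σ` on `[0, L]`:
`u` is `C¹` with derivative `u'`, and `u'` is absolutely continuous, being the
indefinite integral of `σ - a u` (so `u'' + a u = σ` a.e.). -/
def IsSolIcc (a σ : ℝ → ℝ) (L : ℝ) (u u' : ℝ → ℝ) : Prop :=
  (∀ t ∈ Icc (0:ℝ) L, HasDerivAt u (u' t) t) ∧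
  (∀ t ∈ Icc (0:ℝ) L, u' t = u' 0 + ∫ s in (0:ℝ)..t, (σ s - a s * u s))

def PeriodicBC (L : ℝ) : (ℝ → ℝ) → (ℝ → ℝ) → Prop :=
  fun u u' => u 0 = u L ∧ u' 0 = u' L

def AntiperiodicBC (L : ℝ) : (ℝ → ℝ) → (ℝ → ℝ) → Prop :=
  fun u u' => u 0 = -u L ∧ u' 0 = -u' L

def NeumannBC (L : ℝ) : (ℝ → ℝ) → (ℝ → ℝ) → Prop :=
  fun _ u' => u' 0 = 0 ∧ u' L = 0

def DirichletBC (L : ℝ) : (ℝ → ℝ) → (ℝ → ℝ) → Prop :=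
  fun u _ => u 0 = 0 ∧ u L = 0

def Mixed1BC (L : ℝ) : (ℝ → ℝ) → (ℝ → ℝ) → Prop :=
  fun u u' => u' 0 = 0 ∧ u L = 0

def Mixed2BC (L : ℝ) : (ℝ → ℝ) → (ℝ → ℝ) → Prop :=
  fun u u' => u 0 = 0 ∧ u' L = 0

/-- `G` is the Green's function of `u'' + a u = σ` on `[0, L]` with the boundary
conditions `BC`: for every integrable right-hand side `σ`, the function
`t ↦ ∫₀^L G(t,s) σ(s) ds` is a solution of the boundary value problem, and the
solution is unique (on `[0,L]`). -/
def IsGreen (a : ℝ → ℝ) (L : ℝ)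
    (BC : (ℝ → ℝ) → (ℝ → ℝ) → Prop) (G : ℝ → ℝ → ℝ) : Prop :=
  ∀ σ : ℝ → ℝ, IntervalIntegrable σ volume 0 L →
    (∃ w', IsSolIcc a σ L (fun t => ∫ s in (0:ℝ)..L, G t s * σ s) w' ∧
        BC (fun t => ∫ s in (0:ℝ)..L, G t s * σ s) w') ∧
    (∀ u₁ u₁' u₂ u₂', IsSolIcc a σ L u₁ u₁' → BC u₁ u₁' →
        IsSolIcc a σ L u₂ u₂' → BC u₂ u₂' → ∀ t ∈ Icc (0:ℝ) L, u₁ t = u₂ t)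

/-- `lam` is an eigenvalue of `u'' + (a + lam) u = 0` on `[0, L]` with boundary
conditions `BC`: there is a nontrivial W^{2,1} solution. -/
def IsEigen (a : ℝ → ℝ) (L : ℝ)
    (BC : (ℝ → ℝ) → (ℝ → ℝ) → Prop) (lam : ℝ) : Prop :=
  ∃ u u' : ℝ → ℝ, IsSolIcc (fun t => a t + lam) (fun _ => 0) L u u' ∧ BC u u' ∧
    ∃ t ∈ Icc (0:ℝ) L, u t ≠ 0


section Auxiliary

open Filter

lemma evenExt_reflect (T : ℝ) (f : ℝ → ℝ) (u : ℝ) :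
    evenExt T f (2 * T - u) = evenExt T f u := by
  unfold evenExt
  split_ifs with h1 h2 h2
  · congr 1; linarith
  · rfl
  · congr 1; ring
  · push_neg at h1
    exact absurd (by linarith : u ≤ T) h2

lemma evenExt_integrable {T : ℝ} (hT : 0 < T) {f : ℝ → ℝ}
    (hf : IntervalIntegrable f volume 0 T) :
    IntervalIntegrable (evenExt T f) volume 0 (2 * T) := by
  have h1 : IntervalIntegrable (evenExt T f) volume 0 T := by
    rw [intervalIntegrable_iff_integrableOn_Ioc_of_le hT.le] at hf ⊢
    exact hf.congr_fun (fun s hs => by simp [evenExt, hs.2]) measurableSet_Ioc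
  have h2 : IntervalIntegrable (evenExt T f) volume T (2 * T) := by
    have hc := (hf.comp_sub_left (2 * T)).symm
    rw [show 2 * T - T = T by ring, sub_zero] at hc
    rw [intervalIntegrable_iff_integrableOn_Ioc_of_le (by linarith : T ≤ 2 * T)] at hc ⊢
    exact hc.congr_fun (fun s hs => by
      have h : ¬ s ≤ T := not_le.mpr hs.1
      simp [evenExt, h]) measurableSet_Ioc
  exact h1.trans h2

lemma eq_zero_of_cwa {f : ℝ → ℝ} {s : Set ℝ} {x : ℝ}
    (hf : ContinuousWithinAt f s x) (h0 : ∀ y ∈ s, f y = 0)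
    (hx : x ∈ closure s) : f x = 0 := by
  haveI : (nhdsWithin x s).NeBot := mem_closure_iff_nhdsWithin_neBot.mp hx
  have h2 : Filter.Tendsto f (nhdsWithin x s) (nhds 0) := by
    refine Filter.Tendsto.congr' ?_ tendsto_const_nhds
    filter_upwards [self_mem_nhdsWithin] with y hy
    exact (h0 y hy).symm
  exact tendsto_nhds_unique hf h2

end Auxiliary


lemma neumann_from_periodic {T : ℝ} (hT : 0 < T) (a σ : ℝ → ℝ)
    (ha : IntervalIntegrable a volume 0 T) (hσ : IntervalIntegrable σ volume 0 T)
    (v v' : ℝ → ℝ)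
    (hsol : IsSolIcc (evenExt T a) (evenExt T σ) (2 * T) v v')
    (hbc : PeriodicBC (2 * T) v v')
    (huniq : ∀ u₁ u₁' u₂ u₂',
      IsSolIcc (evenExt T a) (evenExt T σ) (2 * T) u₁ u₁' →
      PeriodicBC (2 * T) u₁ u₁' →
      IsSolIcc (evenExt T a) (evenExt T σ) (2 * T) u₂ u₂' →
      PeriodicBC (2 * T) u₂ u₂' →
      ∀ t ∈ Icc (0:ℝ) (2 * T), u₁ t = u₂ t) :
    IsSolIcc a σ T v v' ∧ NeumannBC T v v' := by
  have hT2 : (0:ℝ) < 2 * T := by linarith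
  have hsub : Icc (0:ℝ) T ⊆ Icc (0:ℝ) (2 * T) := Icc_subset_Icc le_rfl (by linarith)
  have haext : IntervalIntegrable (evenExt T a) volume 0 (2 * T) := evenExt_integrable hT ha
  have hσ' : IntervalIntegrable (evenExt T σ) volume 0 (2 * T) := evenExt_integrable hT hσ
  have hvc : ContinuousOn v (Icc 0 (2 * T)) :=
    fun x hx => (hsol.1 x hx).continuousAt.continuousWithinAt
  have hfint : IntervalIntegrable (fun s => evenExt T σ s - evenExt T a s * v s)
      volume 0 (2 * T) := by
    refine hσ'.sub (haext.mul_continuousOn ?_)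
    rwa [uIcc_of_le hT2.le]
  have hmem : ∀ x ∈ Icc (0:ℝ) (2 * T), 2 * T - x ∈ Icc (0:ℝ) (2 * T) :=
    fun x hx => ⟨by linarith [hx.2], by linarith [hx.1]⟩
  -- the reflected function is also a solution
  have hwderiv : ∀ x ∈ Icc (0:ℝ) (2 * T),
      HasDerivAt (fun y => v (2 * T - y)) (-v' (2 * T - x)) x := by
    intro x hx
    have h1 := hsol.1 _ (hmem x hx)
    have h2 : HasDerivAt (fun y : ℝ => 2 * T - y) (-1) x := (hasDerivAt_id x).const_sub (2 * T)
    have h3 := h1.comp x h2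
    simpa [Function.comp_def, mul_neg_one] using h3
  have hweq : ∀ x ∈ Icc (0:ℝ) (2 * T),
      -v' (2 * T - x) = -v' (2 * T - 0) +
        ∫ s in (0:ℝ)..x, (evenExt T σ s - evenExt T a s * v (2 * T - s)) := by
    intro x hx
    have e1 : v' (2 * T - x) = v' 0 + ∫ s in (0:ℝ)..(2 * T - x),
        (evenExt T σ s - evenExt T a s * v s) := hsol.2 _ (hmem x hx)
    have e2 : v' (2 * T) = v' 0 + ∫ s in (0:ℝ)..(2 * T),
        (evenExt T σ s - evenExt T a s * v s) :=
      hsol.2 _ ⟨by linarith, le_rfl⟩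
    have e3 : (∫ s in (0:ℝ)..x, (evenExt T σ s - evenExt T a s * v (2 * T - s)))
        = ∫ s in (0:ℝ)..x,
            (fun s => evenExt T σ s - evenExt T a s * v s) (2 * T - s) := by
      refine intervalIntegral.integral_congr fun s _ => ?_
      simp only
      rw [evenExt_reflect, evenExt_reflect]
    have e4 : (∫ s in (0:ℝ)..x,
          (fun s => evenExt T σ s - evenExt T a s * v s) (2 * T - s))
        = ∫ s in (2 * T - x)..(2 * T - 0),
            (evenExt T σ s - evenExt T a s * v s) := by
      exact intervalIntegral.integral_comp_sub_left
        (fun s => evenExt T σ s - evenExt T a s * v s) (2 * T)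
    have hsub2 : IntervalIntegrable (fun s => evenExt T σ s - evenExt T a s * v s)
        volume 0 (2 * T - x) := by
      refine hfint.mono_set ?_
      rw [uIcc_of_le (by linarith [hx.2] : (0:ℝ) ≤ 2 * T - x), uIcc_of_le hT2.le]
      exact Icc_subset_Icc le_rfl (by linarith [hx.1])
    have e5 := intervalIntegral.integral_interval_sub_left hfint hsub2
    rw [sub_zero] at e4 ⊢
    rw [e3, e4, e1, e2]
    linarith [e5]
  have hwsol : IsSolIcc (evenExt T a) (evenExt T σ) (2 * T)
      (fun y => v (2 * T - y)) (fun y => -v' (2 * T - y)) := ⟨hwderiv, hweq⟩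
  have hwbc : PeriodicBC (2 * T) (fun y => v (2 * T - y)) (fun y => -v' (2 * T - y)) := by
    constructor
    · show v (2 * T - 0) = v (2 * T - 2 * T)
      rw [sub_zero, sub_self]
      exact hbc.1.symm
    · show -v' (2 * T - 0) = -v' (2 * T - 2 * T)
      rw [sub_zero, sub_self]
      exact congrArg Neg.neg hbc.2.symm
  have hveq : ∀ x ∈ Icc (0:ℝ) (2 * T), v x = v (2 * T - x) :=
    huniq v v' _ _ hsol hbc hwsol hwbc
  -- derivative antisymmetry at interior points
  have hder : ∀ x ∈ Ioo (0:ℝ) (2 * T), v' x = -v' (2 * T - x) := by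
    intro x hx
    have h1 := hsol.1 x (Ioo_subset_Icc_self hx)
    have h2 := hwderiv x (Ioo_subset_Icc_self hx)
    have hev : v =ᶠ[nhds x] fun y => v (2 * T - y) := by
      filter_upwards [Icc_mem_nhds hx.1 hx.2] with y hy
      exact hveq y hy
    exact h1.unique (h2.congr_of_eventuallyEq hev)
  have hv'T : v' T = 0 := by
    have h := hder T ⟨hT, by linarith⟩
    rw [show 2 * T - T = T by ring] at h
    linarith
  -- continuity of v' via its primitive formula, to get v' 0 = 0
  have hgc : ContinuousOn (fun x => v' 0 + ∫ s in (0:ℝ)..x,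
      (evenExt T σ s - evenExt T a s * v s)) (Icc 0 (2 * T)) := by
    refine continuousOn_const.add ?_
    have h := intervalIntegral.continuousOn_primitive_interval
      (a := 0) (b := 2 * T) (μ := volume)
      (f := fun s => evenExt T σ s - evenExt T a s * v s) ?_
    · rwa [uIcc_of_le hT2.le] at h
    · rw [uIcc_of_le hT2.le]
      exact (intervalIntegrable_iff_integrableOn_Icc_of_le hT2.le).mp hfint
  have hv'0 : v' 0 = 0 := by
    set g : ℝ → ℝ := fun x => v' 0 + ∫ s in (0:ℝ)..x,
      (evenExt T σ s - evenExt T a s * v s) with hgdef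
    have hgeq : ∀ x ∈ Icc (0:ℝ) (2 * T), g x = v' x := fun x hx => (hsol.2 x hx).symm
    have hFc : ContinuousOn (fun x => g x + g (2 * T - x)) (Icc 0 (2 * T)) := by
      refine hgc.add (hgc.comp ?_ hmem)
      exact (continuous_const.sub continuous_id).continuousOn
    have hF0 : ∀ y ∈ Ioo (0:ℝ) (2 * T), g y + g (2 * T - y) = 0 := by
      intro y hy
      rw [hgeq y (Ioo_subset_Icc_self hy), hgeq _ (hmem y (Ioo_subset_Icc_self hy))]
      have := hder y hy
      linarith
    have hcl : (0:ℝ) ∈ closure (Ioo (0:ℝ) (2 * T)) := by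
      rw [closure_Ioo hT2.ne]
      exact ⟨le_rfl, hT2.le⟩
    have hF00 : (fun x => g x + g (2 * T - x)) 0 = 0 :=
      eq_zero_of_cwa (f := fun x => g x + g (2 * T - x))
        (((hFc 0 ⟨le_rfl, hT2.le⟩).mono Ioo_subset_Icc_self)) hF0 hcl
    simp only [sub_zero] at hF00
    rw [hgeq 0 ⟨le_rfl, hT2.le⟩, hgeq (2 * T) ⟨hT2.le, le_rfl⟩] at hF00
    have := hbc.2
    linarith
  refine ⟨⟨fun x hx => hsol.1 x (hsub hx), ?_⟩, hv'0, hv'T⟩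
  intro x hx
  rw [hsol.2 x (hsub hx)]
  congr 1
  refine intervalIntegral.integral_congr fun s hs => ?_
  have hsT : s ≤ T := by
    rw [uIcc_of_le hx.1] at hs
    exact le_trans hs.2 hx.2
  simp [evenExt, hsT]


lemma rep_eq (T : ℝ) (hT : 0 < T) (a : ℝ → ℝ) (GN GP : ℝ → ℝ → ℝ)
    (ha : IntervalIntegrable a volume 0 T)
    (hcP : ContinuousOn (fun p : ℝ × ℝ => GP p.1 p.2)
      (Icc (0:ℝ) (2 * T) ×ˢ Icc (0:ℝ) (2 * T)))
    (hGN : IsGreen a T (NeumannBC T) GN)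
    (hGP : IsGreen (evenExt T a) (2 * T) (PeriodicBC (2 * T)) GP)
    (σ : ℝ → ℝ) (hσ : IntervalIntegrable σ volume 0 T) :
    ∀ t ∈ Icc (0:ℝ) T, (∫ s in (0:ℝ)..T, GN t s * σ s) =
      (∫ s in (0:ℝ)..T, GP t s * σ s) + ∫ s in (0:ℝ)..T, GP t (2 * T - s) * σ s := by
  have hT2 : (0:ℝ) < 2 * T := by linarith
  have hσ' : IntervalIntegrable (evenExt T σ) volume 0 (2 * T) := evenExt_integrable hT hσ
  obtain ⟨v', hsol, hbc⟩ := (hGP (evenExt T σ) hσ').1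
  obtain ⟨hNsol, hNbc⟩ := neumann_from_periodic hT a σ ha hσ _ v' hsol hbc
    (hGP (evenExt T σ) hσ').2
  intro t ht
  have htmem : t ∈ Icc (0:ℝ) (2 * T) := ⟨ht.1, by linarith [ht.2]⟩
  obtain ⟨wN', hNsol2, hNbc2⟩ := (hGN σ hσ).1
  have heq : (∫ s in (0:ℝ)..T, GN t s * σ s)
      = ∫ s in (0:ℝ)..(2 * T), GP t s * evenExt T σ s :=
    (hGN σ hσ).2 _ wN' _ v' hNsol2 hNbc2 hNsol hNbc t ht
  rw [heq]
  -- continuity of GP t ·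
  have hGPc : ContinuousOn (fun s => GP t s) (Icc 0 (2 * T)) :=
    hcP.comp ((continuous_const.prodMk continuous_id).continuousOn)
      (fun s hs => Set.mk_mem_prod htmem hs)
  have hifull : IntervalIntegrable (fun s => GP t s * evenExt T σ s) volume 0 (2 * T) := by
    refine hσ'.continuousOn_mul ?_
    rwa [uIcc_of_le hT2.le]
  have hi1 : IntervalIntegrable (fun s => GP t s * evenExt T σ s) volume 0 T := by
    refine hifull.mono_set ?_
    rw [uIcc_of_le hT.le, uIcc_of_le hT2.le]
    exact Icc_subset_Icc le_rfl (by linarith)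
  have hi2 : IntervalIntegrable (fun s => GP t s * evenExt T σ s) volume T (2 * T) := by
    refine hifull.mono_set ?_
    rw [uIcc_of_le (by linarith : T ≤ 2 * T), uIcc_of_le hT2.le]
    exact Icc_subset_Icc (by linarith) le_rfl
  have hsplit : (∫ s in (0:ℝ)..(2 * T), GP t s * evenExt T σ s)
      = (∫ s in (0:ℝ)..T, GP t s * evenExt T σ s)
        + ∫ s in T..(2 * T), GP t s * evenExt T σ s :=
    (intervalIntegral.integral_add_adjacent_intervals hi1 hi2).symm
  have hp1 : (∫ s in (0:ℝ)..T, GP t s * evenExt T σ s)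
      = ∫ s in (0:ℝ)..T, GP t s * σ s := by
    refine intervalIntegral.integral_congr fun s hs => ?_
    rw [uIcc_of_le hT.le] at hs
    simp [evenExt, hs.2]
  have hp2 : (∫ s in T..(2 * T), GP t s * evenExt T σ s)
      = ∫ s in (0:ℝ)..T, GP t (2 * T - s) * σ s := by
    have e1 : (∫ s in T..(2 * T), GP t s * evenExt T σ s)
        = ∫ s in T..(2 * T), GP t s * σ (2 * T - s) := by
      refine intervalIntegral.integral_congr fun s hs => ?_
      rw [uIcc_of_le (by linarith : T ≤ 2 * T)] at hs
      unfold evenExt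
      split_ifs with h
      · rw [le_antisymm h hs.1, show 2 * T - T = T by ring]
      · rfl
    have e2 : (∫ x in (0:ℝ)..T, (fun s => GP t s * σ (2 * T - s)) (2 * T - x))
        = ∫ s in (2 * T - T)..(2 * T - 0), GP t s * σ (2 * T - s) := by
      exact intervalIntegral.integral_comp_sub_left
        (fun s => GP t s * σ (2 * T - s)) (2 * T)
    simp only [sub_sub_cancel] at e2
    rw [show 2 * T - T = T by ring, sub_zero] at e2
    rw [e1, ← e2]
  rw [hsplit, hp1, hp2]

/-- `G_N(t,s) = G_P(t,s) + G_P(t, 2T−s)` on `[0,T]²`, where `G_N` is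
the Neumann Green's function on `[0,T]` and `G_P` the periodic one on `[0,2T]`
for the even-extended potential. -/
theorem statement5 (T : ℝ) (hT : 0 < T) (a : ℝ → ℝ) (GN GP : ℝ → ℝ → ℝ)
    (ha : IntervalIntegrable a volume 0 T)
    (hcN : ContinuousOn (fun p : ℝ × ℝ => GN p.1 p.2) (Icc (0:ℝ) T ×ˢ Icc (0:ℝ) T))
    (hcP : ContinuousOn (fun p : ℝ × ℝ => GP p.1 p.2)
      (Icc (0:ℝ) (2 * T) ×ˢ Icc (0:ℝ) (2 * T)))
    (hGN : IsGreen a T (NeumannBC T) GN)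
    (hGP : IsGreen (evenExt T a) (2 * T) (PeriodicBC (2 * T)) GP) :
    ∀ t ∈ Icc (0:ℝ) T, ∀ s ∈ Icc (0:ℝ) T,
      GN t s = GP t s + GP t (2 * T - s) := by
  intro t ht
  have hT2 : (0:ℝ) < 2 * T := by linarith
  have htmem : t ∈ Icc (0:ℝ) (2 * T) := ⟨ht.1, by linarith [ht.2]⟩
  have key := fun (σ : ℝ → ℝ) (hσ : IntervalIntegrable σ volume 0 T) =>
    rep_eq T hT a GN GP ha hcP hGN hGP σ hσ t ht
  have hGNc : ContinuousOn (fun s => GN t s) (Icc 0 T) :=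
    hcN.comp ((continuous_const.prodMk continuous_id).continuousOn)
      (fun s hs => Set.mk_mem_prod ht hs)
  have hGPc : ContinuousOn (fun s => GP t s) (Icc 0 (2 * T)) :=
    hcP.comp ((continuous_const.prodMk continuous_id).continuousOn)
      (fun s hs => Set.mk_mem_prod htmem hs)
  have hGPrc : ContinuousOn (fun s => GP t (2 * T - s)) (Icc 0 T) :=
    hGPc.comp ((continuous_const.sub continuous_id).continuousOn)
      (fun s hs => ⟨by linarith [hs.2], by linarith [hs.1]⟩)
  have hGPc' : ContinuousOn (fun s => GP t s) (Icc 0 T) :=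
    hGPc.mono (Icc_subset_Icc le_rfl (by linarith))
  have hKc : ContinuousOn (fun s => GN t s - (GP t s + GP t (2 * T - s))) (Icc 0 T) :=
    hGNc.sub (hGPc'.add hGPrc)
  have hclamp : ∀ s : ℝ, max 0 (min s T) ∈ Icc (0:ℝ) T :=
    fun s => ⟨le_max_left _ _, max_le hT.le (min_le_right _ _)⟩
  set σ₀ : ℝ → ℝ :=
    fun s => GN t (max 0 (min s T)) - (GP t (max 0 (min s T))
      + GP t (2 * T - max 0 (min s T))) with hσ₀def
  have hσ₀c : Continuous σ₀ :=
    hKc.comp_continuous (continuous_const.max (continuous_id.min continuous_const)) hclamp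
  have hσ₀int : IntervalIntegrable σ₀ volume 0 T := hσ₀c.intervalIntegrable 0 T
  have hkey := key σ₀ hσ₀int
  have hiP1 : IntervalIntegrable (fun s => GP t s * σ₀ s) volume 0 T := by
    refine ContinuousOn.intervalIntegrable ?_
    rw [uIcc_of_le hT.le]
    exact hGPc'.mul hσ₀c.continuousOn
  have hiP2 : IntervalIntegrable (fun s => GP t (2 * T - s) * σ₀ s) volume 0 T := by
    refine ContinuousOn.intervalIntegrable ?_
    rw [uIcc_of_le hT.le]
    exact hGPrc.mul hσ₀c.continuousOn
  have hzero : (∫ s in (0:ℝ)..T, σ₀ s * σ₀ s) = 0 := by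
    have e : (∫ s in (0:ℝ)..T, σ₀ s * σ₀ s)
        = (∫ s in (0:ℝ)..T, GN t s * σ₀ s)
          - ((∫ s in (0:ℝ)..T, GP t s * σ₀ s)
            + ∫ s in (0:ℝ)..T, GP t (2 * T - s) * σ₀ s) := by
      rw [← intervalIntegral.integral_add hiP1 hiP2]
      have hiGN : IntervalIntegrable (fun s => GN t s * σ₀ s) volume 0 T := by
        refine ContinuousOn.intervalIntegrable ?_
        rw [uIcc_of_le hT.le]
        exact hGNc.mul hσ₀c.continuousOn
      have hiB : IntervalIntegrable
          (fun s => GP t s * σ₀ s + GP t (2 * T - s) * σ₀ s) volume 0 T := hiP1.add hiP2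
      rw [← intervalIntegral.integral_sub hiGN hiB]
      refine intervalIntegral.integral_congr fun s hs => ?_
      rw [uIcc_of_le hT.le] at hs
      have hc : max 0 (min s T) = s := by
        rw [min_eq_left hs.2, max_eq_right hs.1]
      simp only [hσ₀def, hc]
      ring
    rw [e, hkey]
    ring
  have hnonneg : (0:ℝ → ℝ) ≤ᵐ[(volume : Measure ℝ)] fun x => σ₀ x * σ₀ x :=
    Filter.Eventually.of_forall fun x => mul_self_nonneg _
  have hq := intervalIntegral.integral_pos_iff_support_of_nonneg_ae hnonneg
    ((hσ₀c.mul hσ₀c).intervalIntegrable 0 T)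
  have hμ : volume (Function.support (fun x => σ₀ x * σ₀ x) ∩ Ioc 0 T) = 0 := by
    by_contra h
    have hpos : 0 < volume (Function.support (fun x => σ₀ x * σ₀ x) ∩ Ioc 0 T) :=
      lt_of_le_of_ne zero_le (Ne.symm h)
    have := hq.mpr ⟨hT, hpos⟩
    rw [hzero] at this
    exact lt_irrefl _ this
  have hIoo : ∀ s ∈ Ioo (0:ℝ) T, σ₀ s = 0 := by
    intro s hs
    by_contra h
    have hopen : IsOpen (Function.support (fun x => σ₀ x * σ₀ x) ∩ Ioo 0 T) := by
      refine IsOpen.inter ?_ isOpen_Ioo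
      rw [Function.support_eq_preimage]
      exact isOpen_compl_singleton.preimage (hσ₀c.mul hσ₀c)
    have hne : (Function.support (fun x => σ₀ x * σ₀ x) ∩ Ioo 0 T).Nonempty :=
      ⟨s, ⟨mul_ne_zero h h, hs⟩⟩
    have hpos := hopen.measure_pos (volume : Measure ℝ) hne
    have hle : volume (Function.support (fun x => σ₀ x * σ₀ x) ∩ Ioo 0 T)
        ≤ volume (Function.support (fun x => σ₀ x * σ₀ x) ∩ Ioc 0 T) :=
      measure_mono (inter_subset_inter_right _ Ioo_subset_Ioc_self)
    rw [hμ] at hle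
    exact absurd (le_antisymm hle zero_le) (ne_of_gt hpos)
  have hIcc : ∀ s ∈ Icc (0:ℝ) T, σ₀ s = 0 := by
    intro s hs
    refine eq_zero_of_cwa (f := σ₀) (s := Ioo 0 T) hσ₀c.continuousWithinAt hIoo ?_
    rw [closure_Ioo hT.ne]
    exact hs
  intro s hs
  have h0 := hIcc s hs
  have hc : max 0 (min s T) = s := by
    rw [min_eq_left hs.2, max_eq_right hs.1]
  rw [hσ₀def] at h0
  simp only [hc] at h0
  linarith
end

section
/- Suppose the Dirichlet problem u''+a·u=σ, u(0)=u(T)=0 on [0,T] and the periodic problem on [0,2T] with potential ã (the even extension of a about t=T) are both uniquely solvable for every L¹ right-hand side, with Green's functions G_D and G_P. Then G_D(t,s) = G_P(t,s) − G_P(2T−t, s) for all (t,s) ∈ [0,T]×[0,T]. -/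
open Set MeasureTheory intervalIntegral

namespace Stmt6

/-- vanishing lemma -/
lemma eq_zero_of_integral_mul_self {L : ℝ} (hL : 0 < L) {f : ℝ → ℝ}
    (hf : ContinuousOn f (Icc 0 L))
    (h : (∫ s in (0:ℝ)..L, f s * f s) = 0) : ∀ s ∈ Icc (0:ℝ) L, f s = 0 := by
  by_contra hc
  push_neg at hc
  obtain ⟨s₀, hs₀, hne⟩ := hc
  set ε : ℝ := f s₀ * f s₀ / 2 with hεdef
  have hεpos : 0 < ε := by
    have : 0 < f s₀ * f s₀ := mul_self_pos.2 hne
    linarith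
  have hlt : ε < f s₀ * f s₀ := by nlinarith
  have h2 : ∀ᶠ s in nhdsWithin s₀ (Icc 0 L), ε < f s * f s :=
    ((hf s₀ hs₀).mul (hf s₀ hs₀)).eventually (eventually_gt_nhds hlt)
  obtain ⟨δ, hδpos, hδ⟩ := Metric.mem_nhdsWithin_iff.1 h2
  set c : ℝ := max 0 (s₀ - δ/2) with hcdef
  set d : ℝ := min L (s₀ + δ/2) with hddef
  have hs₀1 := hs₀.1
  have hs₀2 := hs₀.2
  have hcd : c < d := by
    rw [hcdef, hddef]
    apply max_lt <;> apply lt_min <;> linarith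
  have h0c : (0:ℝ) ≤ c := le_max_left _ _
  have hdL : d ≤ L := min_le_left _ _
  have hsub : Icc c d ⊆ Metric.ball s₀ δ ∩ Icc 0 L := by
    intro x hx
    constructor
    · rw [Metric.mem_ball, Real.dist_eq, abs_lt]
      have h1 : s₀ - δ/2 ≤ c := le_max_right _ _
      have h2 : d ≤ s₀ + δ/2 := min_le_right _ _
      constructor <;> [linarith [hx.1]; linarith [hx.2]]
    · exact ⟨le_trans h0c hx.1, le_trans hx.2 hdL⟩
  have hkey : ∀ x ∈ Icc c d, ε ≤ f x * f x := fun x hx => (hδ (hsub hx)).le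
  have hffc : ContinuousOn (fun s => f s * f s) (Icc 0 L) := hf.mul hf
  have hi : IntervalIntegrable (fun s => f s * f s) volume 0 L := by
    apply ContinuousOn.intervalIntegrable
    rwa [uIcc_of_le hL.le]
  have hmono1 : IntervalIntegrable (fun s => f s * f s) volume 0 c :=
    hi.mono_set (by rw [uIcc_of_le h0c, uIcc_of_le hL.le]
                    exact Icc_subset_Icc le_rfl (le_trans hcd.le hdL))
  have hmono2 : IntervalIntegrable (fun s => f s * f s) volume c d :=
    hi.mono_set (by rw [uIcc_of_le hcd.le, uIcc_of_le hL.le]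
                    exact Icc_subset_Icc h0c hdL)
  have hmono3 : IntervalIntegrable (fun s => f s * f s) volume d L :=
    hi.mono_set (by rw [uIcc_of_le hdL, uIcc_of_le hL.le]
                    exact Icc_subset_Icc (le_trans h0c hcd.le) le_rfl)
  have hsplit : (∫ s in (0:ℝ)..c, f s * f s) + ((∫ s in c..d, f s * f s)
      + (∫ s in d..L, f s * f s)) = ∫ s in (0:ℝ)..L, f s * f s := by
    rw [integral_add_adjacent_intervals hmono2 hmono3,
      integral_add_adjacent_intervals hmono1 (hmono2.trans hmono3)]
  have hmid : ε * (d - c) ≤ ∫ s in c..d, f s * f s := by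
    have := intervalIntegral.integral_mono_on (f := fun _ => ε) hcd.le
      intervalIntegrable_const hmono2 hkey
    rwa [intervalIntegral.integral_const, smul_eq_mul, mul_comm] at this
  have h1 : 0 ≤ ∫ s in (0:ℝ)..c, f s * f s :=
    intervalIntegral.integral_nonneg h0c (fun u _ => mul_self_nonneg _)
  have h3 : 0 ≤ ∫ s in d..L, f s * f s :=
    intervalIntegral.integral_nonneg hdL (fun u _ => mul_self_nonneg _)
  have hpos : 0 < ε * (d - c) := mul_pos hεpos (by linarith)
  rw [h] at hsplit
  linarith


lemma isSolIcc_congr_ae {A ρ₁ ρ₂ u u' : ℝ → ℝ} {L : ℝ}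
    (hae : ∀ᵐ s : ℝ, ρ₁ s = ρ₂ s)
    (h : IsSolIcc A ρ₁ L u u') : IsSolIcc A ρ₂ L u u' := by
  refine ⟨h.1, fun t ht => ?_⟩
  rw [h.2 t ht]
  congr 1
  apply intervalIntegral.integral_congr_ae
  filter_upwards [hae] with s hs _
  rw [hs]

lemma isSolIcc_neg {A ρ u u' : ℝ → ℝ} {L : ℝ} (h : IsSolIcc A ρ L u u') :
    IsSolIcc A (fun s => -ρ s) L (fun t => -u t) (fun t => -u' t) := by
  refine ⟨fun t ht => (h.1 t ht).neg, fun t ht => ?_⟩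
  have h2 := h.2 t ht
  have hint : (∫ s in (0:ℝ)..t, (-ρ s - A s * -u s))
      = - ∫ s in (0:ℝ)..t, (ρ s - A s * u s) := by
    rw [← intervalIntegral.integral_neg]
    apply intervalIntegral.integral_congr
    intro x _
    ring
  show -u' t = -u' 0 + ∫ s in (0:ℝ)..t, (-ρ s - A s * -u s)
  rw [hint]
  linarith

lemma isSolIcc_reflect {A ρ v v' : ℝ → ℝ} {L : ℝ} (hL : 0 ≤ L)
    (hA : IntervalIntegrable A volume 0 L) (hρ : IntervalIntegrable ρ volume 0 L)
    (hAsym : ∀ t, A (L - t) = A t)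
    (h : IsSolIcc A ρ L v v') :
    IsSolIcc A (fun s => ρ (L - s)) L (fun t => v (L - t)) (fun t => -v' (L - t)) := by
  have hmem : ∀ t ∈ Icc (0:ℝ) L, L - t ∈ Icc (0:ℝ) L :=
    fun t ht => ⟨by linarith [ht.2], by linarith [ht.1]⟩
  constructor
  · intro t ht
    have h1 : HasDerivAt (fun t : ℝ => L - t) (-1) t := by
      simpa using (hasDerivAt_id t).const_sub L
    have h2 := (h.1 (L - t) (hmem t ht)).comp t h1
    show HasDerivAt (fun t => v (L - t)) (-v' (L - t)) t
    simpa [Function.comp_def, mul_comm] using h2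
  · intro t ht
    have hv : ContinuousOn v (Icc 0 L) :=
      fun x hx => (h.1 x hx).continuousAt.continuousWithinAt
    have hg : IntervalIntegrable (fun s => ρ s - A s * v s) volume 0 L := by
      apply hρ.sub
      apply hA.mul_continuousOn
      rwa [uIcc_of_le hL]
    have hLt : (0:ℝ) ≤ L - t := by linarith [ht.2]
    have htL : L - t ≤ L := by linarith [ht.1]
    have h1 := h.2 (L - t) (hmem t ht)
    have h0 := h.2 L (right_mem_Icc.2 hL)
    have hadd : (∫ s in (0:ℝ)..(L - t), (ρ s - A s * v s))
        + (∫ s in (L - t)..L, (ρ s - A s * v s))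
        = ∫ s in (0:ℝ)..L, (ρ s - A s * v s) := by
      apply intervalIntegral.integral_add_adjacent_intervals
      · exact hg.mono_set (by rw [uIcc_of_le hLt, uIcc_of_le hL]
                              exact Icc_subset_Icc le_rfl htL)
      · exact hg.mono_set (by rw [uIcc_of_le (by linarith [ht.1] : L - t ≤ L), uIcc_of_le hL]
                              exact Icc_subset_Icc hLt le_rfl)
    have hcomp : (∫ s in (0:ℝ)..t, (ρ (L - s) - A s * v (L - s)))
        = ∫ s in (L - t)..L, (ρ s - A s * v s) := by
      have e1 : (∫ s in (0:ℝ)..t, (ρ (L - s) - A s * v (L - s)))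
          = ∫ s in (0:ℝ)..t, (ρ (L - s) - A (L - s) * v (L - s)) := by
        apply intervalIntegral.integral_congr
        intro x _
        show ρ (L - x) - A x * v (L - x) = ρ (L - x) - A (L - x) * v (L - x)
        rw [hAsym]
      have e2 := intervalIntegral.integral_comp_sub_left
        (a := 0) (b := t) (fun s => ρ s - A s * v s) L
      rw [e1, e2, sub_zero]
    show -v' (L - t) = -v' (L - 0) + ∫ s in (0:ℝ)..t, (ρ (L - s) - A s * v (L - s))
    rw [hcomp, sub_zero]
    linarith

lemma evenExt_reflect (T : ℝ) (a : ℝ → ℝ) (t : ℝ) :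
    evenExt T a (2 * T - t) = evenExt T a t := by
  unfold evenExt
  split_ifs with h1 h2 h2
  · congr 1; linarith [le_antisymm h2 (by linarith : T ≤ t)]
  · rfl
  · congr 1; ring
  · linarith

lemma oddExt_reflect (T : ℝ) (σ : ℝ → ℝ) {s : ℝ} (hs : s ≠ T) :
    oddExt T σ (2 * T - s) = -oddExt T σ s := by
  unfold oddExt
  split_ifs with h1 h2 h2
  · exact absurd (le_antisymm h2 (by linarith : T ≤ s)) hs
  · rw [neg_neg]
  · congr 2; ring
  · linarith

lemma oddExt_reflect_ae (T : ℝ) (σ : ℝ → ℝ) :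
    ∀ᵐ s : ℝ, -oddExt T σ (2 * T - s) = oddExt T σ s := by
  have h0 : ∀ᵐ s : ℝ, s ≠ T := by
    rw [MeasureTheory.ae_iff]
    have he : {a : ℝ | ¬ a ≠ T} = {T} := by ext x; simp
    rw [he]
    exact measure_singleton T
  filter_upwards [h0] with s hs
  rw [oddExt_reflect T σ hs, neg_neg]

lemma evenExt_integrable {T : ℝ} {a : ℝ → ℝ} (hT : 0 < T)
    (ha : IntervalIntegrable a volume 0 T) :
    IntervalIntegrable (evenExt T a) volume 0 (2 * T) := by
  have h1 : IntervalIntegrable (evenExt T a) volume 0 T := by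
    rw [intervalIntegrable_iff] at ha ⊢
    apply ha.congr_fun _ measurableSet_uIoc
    intro x hx
    rw [uIoc_of_le hT.le] at hx
    exact (if_pos hx.2).symm
  have h2 : IntervalIntegrable (evenExt T a) volume T (2 * T) := by
    have h := (ha.comp_sub_left (2 * T)).symm
    rw [sub_zero, show (2:ℝ) * T - T = T by ring] at h
    rw [intervalIntegrable_iff] at h ⊢
    apply h.congr_fun _ measurableSet_uIoc
    intro x hx
    rw [uIoc_of_le (by linarith : T ≤ 2 * T)] at hx
    exact (if_neg (not_le.2 hx.1)).symm
  exact h1.trans h2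

lemma oddExt_integrable {T : ℝ} {σ : ℝ → ℝ} (hT : 0 < T)
    (hσ : IntervalIntegrable σ volume 0 T) :
    IntervalIntegrable (oddExt T σ) volume 0 (2 * T) := by
  have h1 : IntervalIntegrable (oddExt T σ) volume 0 T := by
    rw [intervalIntegrable_iff] at hσ ⊢
    apply hσ.congr_fun _ measurableSet_uIoc
    intro x hx
    rw [uIoc_of_le hT.le] at hx
    exact (if_pos hx.2).symm
  have h2 : IntervalIntegrable (oddExt T σ) volume T (2 * T) := by
    have h := ((hσ.comp_sub_left (2 * T)).symm).neg
    rw [sub_zero, show (2:ℝ) * T - T = T by ring] at h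
    rw [intervalIntegrable_iff] at h ⊢
    apply h.congr_fun _ measurableSet_uIoc
    intro x hx
    rw [uIoc_of_le (by linarith : T ≤ 2 * T)] at hx
    exact (if_neg (not_le.2 hx.1)).symm
  exact h1.trans h2

lemma isSolIcc_congr {A ρ₁ ρ₂ u₁ u₂ u₁' u₂' : ℝ → ℝ} {L : ℝ}
    (hρ : ∀ s, ρ₁ s = ρ₂ s) (hu : ∀ t, u₁ t = u₂ t) (hu' : ∀ t, u₁' t = u₂' t)
    (h : IsSolIcc A ρ₁ L u₁ u₁') : IsSolIcc A ρ₂ L u₂ u₂' := by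
  rw [← funext hρ, ← funext hu, ← funext hu']
  exact h

end Stmt6

/-- `G_D(t,s) = G_P(t,s) − G_P(2T−t, s)` on `[0,T]²`, where `G_D` is
the Dirichlet Green's function on `[0,T]` and `G_P` the periodic one on `[0,2T]`
for the even-extended potential. -/
theorem statement6 (T : ℝ) (hT : 0 < T) (a : ℝ → ℝ) (GD GP : ℝ → ℝ → ℝ)
    (ha : IntervalIntegrable a volume 0 T)
    (hcD : ContinuousOn (fun p : ℝ × ℝ => GD p.1 p.2) (Icc (0:ℝ) T ×ˢ Icc (0:ℝ) T))
    (hcP : ContinuousOn (fun p : ℝ × ℝ => GP p.1 p.2)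
      (Icc (0:ℝ) (2 * T) ×ˢ Icc (0:ℝ) (2 * T)))
    (hGD : IsGreen a T (DirichletBC T) GD)
    (hGP : IsGreen (evenExt T a) (2 * T) (PeriodicBC (2 * T)) GP) :
    ∀ t ∈ Icc (0:ℝ) T, ∀ s ∈ Icc (0:ℝ) T,
      GD t s = GP t s - GP (2 * T - t) s := by
  have hT2 : (0:ℝ) ≤ 2 * T := by linarith
  have hT2' : (0:ℝ) < 2 * T := by linarith
  have haext : IntervalIntegrable (evenExt T a) volume 0 (2 * T) :=
    Stmt6.evenExt_integrable hT ha
  have hAsym : ∀ t, evenExt T a (2 * T - t) = evenExt T a t := Stmt6.evenExt_reflect T a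
  have hProw : ∀ t ∈ Icc (0:ℝ) (2 * T),
      ContinuousOn (fun s : ℝ => GP t s) (Icc 0 (2 * T)) := by
    intro t ht
    exact hcP.comp (continuous_const.prodMk continuous_id).continuousOn
      (fun s hs => Set.mk_mem_prod ht hs)
  -- Step 1: reflection symmetry of GP
  have hsymm : ∀ t ∈ Icc (0:ℝ) (2 * T), ∀ s ∈ Icc (0:ℝ) (2 * T),
      GP t s = GP (2 * T - t) (2 * T - s) := by
    intro t ht
    have hrt : ContinuousOn (fun s : ℝ => GP t s) (Icc 0 (2 * T)) := hProw t ht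
    have ht' : 2 * T - t ∈ Icc (0:ℝ) (2 * T) := ⟨by linarith [ht.2], by linarith [ht.1]⟩
    have hrt' : ContinuousOn (fun s : ℝ => GP (2 * T - t) (2 * T - s)) (Icc 0 (2 * T)) :=
      (hProw (2 * T - t) ht').comp (continuous_const.sub continuous_id).continuousOn
        (fun s hs => ⟨by linarith [hs.2], by linarith [hs.1]⟩)
    have key : ∀ ρ : ℝ → ℝ, IntervalIntegrable ρ volume 0 (2 * T) →
        (∫ x in (0:ℝ)..(2 * T), GP t x * ρ x)
          = ∫ x in (0:ℝ)..(2 * T), GP (2 * T - t) (2 * T - x) * ρ x := by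
      intro ρ hρ
      have hτint : IntervalIntegrable (fun s => ρ (2 * T - s)) volume 0 (2 * T) := by
        have h := (hρ.comp_sub_left (2 * T)).symm
        rw [sub_zero, show (2:ℝ) * T - 2 * T = 0 by ring] at h
        exact h
      obtain ⟨w', hw, hwbc⟩ := (hGP ρ hρ).1
      obtain ⟨p', hp, hpbc⟩ := (hGP _ hτint).1
      have hrefl := Stmt6.isSolIcc_reflect hT2 haext hτint hAsym hp
      have hrefl' : IsSolIcc (evenExt T a) ρ (2 * T)
          (fun r => ∫ x in (0:ℝ)..(2 * T), GP (2 * T - r) x * ρ (2 * T - x))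
          (fun r => -p' (2 * T - r)) :=
        Stmt6.isSolIcc_congr
          (fun s => by show ρ (2 * T - (2 * T - s)) = ρ s; congr 1; ring)
          (fun r => rfl) (fun r => rfl) hrefl
      have hbc2 : PeriodicBC (2 * T)
          (fun r => ∫ x in (0:ℝ)..(2 * T), GP (2 * T - r) x * ρ (2 * T - x))
          (fun r => -p' (2 * T - r)) := by
        constructor
        · show (∫ x in (0:ℝ)..(2 * T), GP (2 * T - 0) x * ρ (2 * T - x))
            = ∫ x in (0:ℝ)..(2 * T), GP (2 * T - 2 * T) x * ρ (2 * T - x)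
          rw [sub_zero, sub_self]
          exact hpbc.1.symm
        · show -p' (2 * T - 0) = -p' (2 * T - 2 * T)
          rw [sub_zero, sub_self, hpbc.2]
      have huniq := (hGP ρ hρ).2 _ w' _ (fun r => -p' (2 * T - r)) hw hwbc hrefl' hbc2 t ht
      refine huniq.trans ?_
      show (∫ x in (0:ℝ)..(2 * T), GP (2 * T - t) x * ρ (2 * T - x)) = _
      have hsub2 := intervalIntegral.integral_comp_sub_left (a := 0) (b := 2 * T)
        (fun x => GP (2 * T - t) x * ρ (2 * T - x)) (2 * T)
      rw [sub_zero, show (2:ℝ) * T - 2 * T = 0 by ring] at hsub2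
      rw [← hsub2]
      apply intervalIntegral.integral_congr
      intro x _
      show GP (2 * T - t) (2 * T - x) * ρ (2 * T - (2 * T - x))
        = GP (2 * T - t) (2 * T - x) * ρ x
      congr 2
      ring
    intro s hs
    have hfc : ContinuousOn (fun x : ℝ => GP t x - GP (2 * T - t) (2 * T - x))
        (Icc 0 (2 * T)) := hrt.sub hrt'
    have hfint : IntervalIntegrable (fun x : ℝ => GP t x - GP (2 * T - t) (2 * T - x))
        volume 0 (2 * T) := by
      apply ContinuousOn.intervalIntegrable
      rwa [uIcc_of_le hT2]
    have hzero : (∫ x in (0:ℝ)..(2 * T),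
        (GP t x - GP (2 * T - t) (2 * T - x)) * (GP t x - GP (2 * T - t) (2 * T - x))) = 0 := by
      have h1 : IntervalIntegrable
          (fun x => GP t x * (GP t x - GP (2 * T - t) (2 * T - x))) volume 0 (2 * T) :=
        hfint.continuousOn_mul (by rwa [uIcc_of_le hT2])
      have h2 : IntervalIntegrable
          (fun x => GP (2 * T - t) (2 * T - x) * (GP t x - GP (2 * T - t) (2 * T - x)))
          volume 0 (2 * T) :=
        hfint.continuousOn_mul (by rwa [uIcc_of_le hT2])
      have he : (∫ x in (0:ℝ)..(2 * T),
          (GP t x - GP (2 * T - t) (2 * T - x)) * (GP t x - GP (2 * T - t) (2 * T - x)))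
          = (∫ x in (0:ℝ)..(2 * T), GP t x * (GP t x - GP (2 * T - t) (2 * T - x)))
            - ∫ x in (0:ℝ)..(2 * T),
              GP (2 * T - t) (2 * T - x) * (GP t x - GP (2 * T - t) (2 * T - x)) := by
        rw [← intervalIntegral.integral_sub h1 h2]
        apply intervalIntegral.integral_congr
        intro x _
        show (GP t x - GP (2 * T - t) (2 * T - x)) * (GP t x - GP (2 * T - t) (2 * T - x))
          = GP t x * (GP t x - GP (2 * T - t) (2 * T - x))
            - GP (2 * T - t) (2 * T - x) * (GP t x - GP (2 * T - t) (2 * T - x))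
        ring
      rw [he, key _ hfint, sub_self]
    have hval := Stmt6.eq_zero_of_integral_mul_self hT2' hfc hzero s hs
    have : GP t s - GP (2 * T - t) (2 * T - s) = 0 := hval
    linarith
  -- Step 2: main identity
  intro t ht s hs
  have htP : t ∈ Icc (0:ℝ) (2 * T) := ⟨ht.1, by linarith [ht.2]⟩
  have hrowt : ContinuousOn (fun x : ℝ => GP t x) (Icc 0 (2 * T)) := hProw t htP
  have key2 : ∀ ρ : ℝ → ℝ, IntervalIntegrable ρ volume 0 T →
      (∫ x in (0:ℝ)..T, GD t x * ρ x)
        = ∫ x in (0:ℝ)..T, (GP t x - GP t (2 * T - x)) * ρ x := by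
    intro ρ hρ
    have hρe : IntervalIntegrable (oddExt T ρ) volume 0 (2 * T) :=
      Stmt6.oddExt_integrable hT hρ
    obtain ⟨v', hv, hvbc⟩ := (hGP _ hρe).1
    set v : ℝ → ℝ := fun u => ∫ x in (0:ℝ)..(2 * T), GP u x * oddExt T ρ x with hvdef
    have hrefl := Stmt6.isSolIcc_reflect hT2 haext hρe hAsym hv
    have hneg := Stmt6.isSolIcc_neg hrefl
    have hodd_sol' : IsSolIcc (evenExt T a) (fun x => -oddExt T ρ (2 * T - x)) (2 * T)
        (fun r => -v (2 * T - r)) (fun r => v' (2 * T - r)) :=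
      Stmt6.isSolIcc_congr (fun x => rfl) (fun r => rfl) (fun r => neg_neg _) hneg
    have hodd_sol : IsSolIcc (evenExt T a) (oddExt T ρ) (2 * T)
        (fun r => -v (2 * T - r)) (fun r => v' (2 * T - r)) :=
      Stmt6.isSolIcc_congr_ae (Stmt6.oddExt_reflect_ae T ρ) hodd_sol'
    have hoddbc : PeriodicBC (2 * T) (fun r => -v (2 * T - r))
        (fun r => v' (2 * T - r)) := by
      constructor
      · show -v (2 * T - 0) = -v (2 * T - 2 * T)
        rw [sub_zero, sub_self, hvbc.1]
      · show v' (2 * T - 0) = v' (2 * T - 2 * T)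
        rw [sub_zero, sub_self, hvbc.2]
    have hvodd : ∀ r ∈ Icc (0:ℝ) (2 * T), v r = -v (2 * T - r) :=
      (hGP _ hρe).2 v v' _ _ hv hvbc hodd_sol hoddbc
    have hv0 : v 0 = 0 := by
      have h1 := hvodd 0 ⟨le_rfl, hT2⟩
      rw [sub_zero] at h1
      have h2 : v 0 = v (2 * T) := hvbc.1
      linarith
    have hvT : v T = 0 := by
      have h1 := hvodd T ⟨hT.le, by linarith⟩
      rw [show (2:ℝ) * T - T = T by ring] at h1
      linarith
    have hDsol : IsSolIcc a ρ T v v' := by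
      refine ⟨fun r hr => hv.1 r ⟨hr.1, by linarith [hr.2]⟩, fun r hr => ?_⟩
      rw [hv.2 r ⟨hr.1, by linarith [hr.2]⟩]
      congr 1
      apply intervalIntegral.integral_congr
      intro x hx
      rw [uIcc_of_le hr.1] at hx
      have hxT : x ≤ T := le_trans hx.2 hr.2
      show oddExt T ρ x - evenExt T a x * v x = ρ x - a x * v x
      simp only [oddExt, evenExt, if_pos hxT]
    obtain ⟨w', hw, hwbc⟩ := (hGD ρ hρ).1
    have hDir := (hGD ρ hρ).2 _ w' v v' hw hwbc hDsol ⟨hv0, hvT⟩ t ht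
    refine hDir.trans ?_
    show (∫ x in (0:ℝ)..(2 * T), GP t x * oddExt T ρ x) = _
    have hPcont : ContinuousOn (fun x : ℝ => GP t x) (uIcc 0 (2 * T)) := by
      rwa [uIcc_of_le hT2]
    have hint1 : IntervalIntegrable (fun x => GP t x * oddExt T ρ x) volume 0 (2 * T) :=
      hρe.continuousOn_mul hPcont
    have hm1 : IntervalIntegrable (fun x => GP t x * oddExt T ρ x) volume 0 T :=
      hint1.mono_set (by rw [uIcc_of_le hT.le, uIcc_of_le hT2]
                         exact Icc_subset_Icc le_rfl (by linarith))
    have hm2 : IntervalIntegrable (fun x => GP t x * oddExt T ρ x) volume T (2 * T) :=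
      hint1.mono_set (by rw [uIcc_of_le (by linarith : T ≤ 2 * T), uIcc_of_le hT2]
                         exact Icc_subset_Icc hT.le le_rfl)
    rw [← intervalIntegral.integral_add_adjacent_intervals hm1 hm2]
    have hA : (∫ x in (0:ℝ)..T, GP t x * oddExt T ρ x)
        = ∫ x in (0:ℝ)..T, GP t x * ρ x := by
      apply intervalIntegral.integral_congr
      intro x hx
      rw [uIcc_of_le hT.le] at hx
      show GP t x * oddExt T ρ x = GP t x * ρ x
      simp only [oddExt, if_pos hx.2]
    have hB : (∫ x in T..(2 * T), GP t x * oddExt T ρ x)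
        = - ∫ x in (0:ℝ)..T, GP t (2 * T - x) * ρ x := by
      have hB1 : (∫ x in T..(2 * T), GP t x * oddExt T ρ x)
          = ∫ x in T..(2 * T), -(GP t x * ρ (2 * T - x)) := by
        apply intervalIntegral.integral_congr_ae
        apply MeasureTheory.ae_of_all
        intro x hx
        rw [uIoc_of_le (by linarith : T ≤ 2 * T)] at hx
        show GP t x * oddExt T ρ x = -(GP t x * ρ (2 * T - x))
        simp only [oddExt, if_neg (not_le.2 hx.1)]
        ring
      have hB2 := intervalIntegral.integral_comp_sub_left (a := 0) (b := T)
        (fun x => GP t x * ρ (2 * T - x)) (2 * T)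
      rw [sub_zero, show (2:ℝ) * T - T = T by ring] at hB2
      have hB3 : (∫ x in (0:ℝ)..T, GP t (2 * T - x) * ρ (2 * T - (2 * T - x)))
          = ∫ x in (0:ℝ)..T, GP t (2 * T - x) * ρ x := by
        apply intervalIntegral.integral_congr
        intro x _
        show GP t (2 * T - x) * ρ (2 * T - (2 * T - x)) = GP t (2 * T - x) * ρ x
        congr 2
        ring
      rw [hB1, intervalIntegral.integral_neg, ← hB2, hB3]
    rw [hA, hB]
    have hc1 : ContinuousOn (fun x : ℝ => GP t x) (uIcc 0 T) := by
      rw [uIcc_of_le hT.le]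
      exact hrowt.mono (Icc_subset_Icc le_rfl (by linarith))
    have hc2 : ContinuousOn (fun x : ℝ => GP t (2 * T - x)) (uIcc 0 T) := by
      rw [uIcc_of_le hT.le]
      exact hrowt.comp (continuous_const.sub continuous_id).continuousOn
        (fun x hx => ⟨by linarith [hx.2], by linarith [hx.1]⟩)
    rw [← sub_eq_add_neg,
      ← intervalIntegral.integral_sub (hρ.continuousOn_mul hc1) (hρ.continuousOn_mul hc2)]
    apply intervalIntegral.integral_congr
    intro x _
    show GP t x * ρ x - GP t (2 * T - x) * ρ x = (GP t x - GP t (2 * T - x)) * ρ x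
    ring
  -- Step 3: vanishing argument on [0,T]
  have hDrow : ContinuousOn (fun x : ℝ => GD t x) (Icc 0 T) :=
    hcD.comp (continuous_const.prodMk continuous_id).continuousOn
      (fun x hx => Set.mk_mem_prod ht hx)
  have hc1 : ContinuousOn (fun x : ℝ => GP t x) (Icc 0 T) :=
    hrowt.mono (Icc_subset_Icc le_rfl (by linarith))
  have hc2 : ContinuousOn (fun x : ℝ => GP t (2 * T - x)) (Icc 0 T) :=
    hrowt.comp (continuous_const.sub continuous_id).continuousOn
      (fun x hx => ⟨by linarith [hx.2], by linarith [hx.1]⟩)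
  have hfc : ContinuousOn (fun x : ℝ => GD t x - GP t x + GP t (2 * T - x)) (Icc 0 T) :=
    (hDrow.sub hc1).add hc2
  have hfint : IntervalIntegrable (fun x : ℝ => GD t x - GP t x + GP t (2 * T - x))
      volume 0 T := by
    apply ContinuousOn.intervalIntegrable
    rwa [uIcc_of_le hT.le]
  have hzero : (∫ x in (0:ℝ)..T, (GD t x - GP t x + GP t (2 * T - x))
      * (GD t x - GP t x + GP t (2 * T - x))) = 0 := by
    have hα : IntervalIntegrable
        (fun x => GD t x * (GD t x - GP t x + GP t (2 * T - x))) volume 0 T :=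
      hfint.continuousOn_mul (by rwa [uIcc_of_le hT.le])
    have hβ : IntervalIntegrable
        (fun x => (GP t x - GP t (2 * T - x)) * (GD t x - GP t x + GP t (2 * T - x)))
        volume 0 T :=
      hfint.continuousOn_mul (by rw [uIcc_of_le hT.le]; exact hc1.sub hc2)
    have he : (∫ x in (0:ℝ)..T, (GD t x - GP t x + GP t (2 * T - x))
        * (GD t x - GP t x + GP t (2 * T - x)))
        = (∫ x in (0:ℝ)..T, GD t x * (GD t x - GP t x + GP t (2 * T - x)))
          - ∫ x in (0:ℝ)..T, (GP t x - GP t (2 * T - x))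
            * (GD t x - GP t x + GP t (2 * T - x)) := by
      rw [← intervalIntegral.integral_sub hα hβ]
      apply intervalIntegral.integral_congr
      intro x _
      show (GD t x - GP t x + GP t (2 * T - x)) * (GD t x - GP t x + GP t (2 * T - x))
        = GD t x * (GD t x - GP t x + GP t (2 * T - x))
          - (GP t x - GP t (2 * T - x)) * (GD t x - GP t x + GP t (2 * T - x))
      ring
    rw [he, key2 _ hfint, sub_self]
  have hval := Stmt6.eq_zero_of_integral_mul_self hT hfc hzero s hs
  have hval' : GD t s - GP t s + GP t (2 * T - s) = 0 := hval
  have hsy := hsymm t htP (2 * T - s) ⟨by linarith [hs.2], by linarith [hs.1]⟩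
  rw [show (2:ℝ) * T - (2 * T - s) = s by ring] at hsy
  linarith
end

section
/- Assume L[a]u = u''+a·u is nonresonant and self-adjoint on a Banach space X ⊂ W^{2,1}(0,T) with Green's function G satisfying G(t,s)=G(s,t) on [0,T]². If G does not change sign on [0,T]² and G(t₀,s₀)=0 at some point with 0 < t₀, s₀ < T and t₀ ≠ s₀, then a contradiction arises; i.e., any zero (t₀,s₀) of a symmetric, one-signed Green's function must satisfy t₀=s₀, or t₀ ∈ {0,T}, or s₀ ∈ {0,T}. -/
open Set MeasureTheory intervalIntegral

/-- `u` is a Carathéodory solution of the homogeneous equation `u'' + a u = 0` on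
`[c,d]`, with `u'` its (one-sided at the endpoints) derivative. -/
def IsSolPiece (a : ℝ → ℝ) (c d : ℝ) (u u' : ℝ → ℝ) : Prop :=
  (∀ t ∈ Icc c d, HasDerivWithinAt u (u' t) (Icc c d) t) ∧
  (∀ t ∈ Icc c d, u' t = u' c + ∫ s in c..t, (-(a s * u s)))

section helpers

/-- interior zero of a one-signed function has zero derivative -/
private lemma deriv_zero_of_sign {T : ℝ} {f : ℝ → ℝ} {f' x : ℝ}
    (hx : x ∈ Ioo (0:ℝ) T)
    (hsgn : (∀ t ∈ Icc (0:ℝ) T, 0 ≤ f t) ∨ (∀ t ∈ Icc (0:ℝ) T, f t ≤ 0))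
    (hfx : f x = 0) (hd : HasDerivAt f f' x) : f' = 0 := by
  have hmem : Icc (0:ℝ) T ∈ nhds x := Icc_mem_nhds hx.1 hx.2
  rcases hsgn with h | h
  · have : IsLocalMin f x := by
      filter_upwards [hmem] with t ht
      rw [hfx]; exact h t ht
    exact this.hasDerivAt_eq_zero hd
  · have : IsLocalMax f x := by
      filter_upwards [hmem] with t ht
      rw [hfx]; exact h t ht
    exact this.hasDerivAt_eq_zero hd

/-- Forward vanishing: a Carathéodory solution of `u'' + a u = 0` on `[c,d]` with a
double zero at `x₀` vanishes (with its derivative) on `[x₀, d]`. -/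
private lemma fv {a u u' : ℝ → ℝ} {c d x₀ : ℝ}
    (ha : IntervalIntegrable a volume c d)
    (hsol : IsSolPiece a c d u u') (hx₀ : x₀ ∈ Icc c d)
    (hu0 : u x₀ = 0) (hu'0 : u' x₀ = 0) :
    ∀ t ∈ Icc x₀ d, u t = 0 ∧ u' t = 0 := by
  obtain ⟨hcx, hxd⟩ := hx₀
  have hcd : c ≤ d := hcx.trans hxd
  have hu_cont : ContinuousOn u (Icc c d) := fun t ht => (hsol.1 t ht).continuousWithinAt
  have hInt_au : IntervalIntegrable (fun s => -(a s * u s)) volume c d :=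
    (ha.mul_continuousOn (by rwa [uIcc_of_le hcd])).neg
  have hu'_cont : ContinuousOn u' (Icc c d) := by
    have h1 : ContinuousOn (fun t => u' c + ∫ s in c..t, (-(a s * u s))) (Icc c d) := by
      apply continuousOn_const.add
      have := continuousOn_primitive_interval' hInt_au (by rw [uIcc_of_le hcd]; exact ⟨le_rfl, hcd⟩)
      rwa [uIcc_of_le hcd] at this
    exact h1.congr (fun t ht => hsol.2 t ht)
  -- the set where u, u' vanish to the right of x₀
  set S : Set ℝ := {t | t ∈ Icc x₀ d ∧ ∀ r ∈ Icc x₀ t, u r = 0 ∧ u' r = 0} with hS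
  have hx₀S : x₀ ∈ S := by
    refine ⟨⟨le_rfl, hxd⟩, fun r hr => ?_⟩
    have : r = x₀ := le_antisymm hr.2 hr.1
    rw [this]; exact ⟨hu0, hu'0⟩
  have hbdd : BddAbove S := ⟨d, fun t ht => ht.1.2⟩
  have hneS : S.Nonempty := ⟨x₀, hx₀S⟩
  set m := sSup S with hm
  have hx₀m : x₀ ≤ m := le_csSup hbdd hx₀S
  have hmd : m ≤ d := csSup_le hneS (fun t ht => ht.1.2)
  have hzero_lt : ∀ r, x₀ ≤ r → r < m → u r = 0 ∧ u' r = 0 := by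
    intro r hr hrm
    obtain ⟨t, htS, hrt⟩ := exists_lt_of_lt_csSup hneS hrm
    exact htS.2 r ⟨hr, hrt.le⟩
  -- vanishing at m itself
  have hum : u m = 0 ∧ u' m = 0 := by
    rcases eq_or_lt_of_le hx₀m with h | h
    · rw [← h]; exact ⟨hu0, hu'0⟩
    · have hmB : (nhdsWithin m (Ico x₀ m)).NeBot := by
        rw [← mem_closure_iff_nhdsWithin_neBot, closure_Ico h.ne]
        exact ⟨hx₀m, le_rfl⟩
      have hsub : Ico x₀ m ⊆ Icc c d := fun r hr => ⟨hcx.trans hr.1, hr.2.le.trans hmd⟩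
      have key : ∀ f : ℝ → ℝ, ContinuousOn f (Icc c d) → (∀ r ∈ Ico x₀ m, f r = 0) → f m = 0 := by
        intro f hf hf0
        have h1 : Filter.Tendsto f (nhdsWithin m (Ico x₀ m)) (nhds (f m)) :=
          ((hf m ⟨hcx.trans hx₀m, hmd⟩).mono hsub)
        have h2 : Filter.Tendsto f (nhdsWithin m (Ico x₀ m)) (nhds 0) := by
          apply Filter.Tendsto.congr' _ tendsto_const_nhds
          filter_upwards [self_mem_nhdsWithin] with r hr
          exact (hf0 r hr).symm
        exact (tendsto_nhds_unique h1 h2)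
      exact ⟨key u hu_cont (fun r hr => (hzero_lt r hr.1 hr.2).1),
             key u' hu'_cont (fun r hr => (hzero_lt r hr.1 hr.2).2)⟩
  have hmeqd : m = d := by
    by_contra hne
    have hmd' : m < d := lt_of_le_of_ne hmd hne
    have hcm : c ≤ m := hcx.trans hx₀m
    -- w = 1 + |a|, integrable on [m, d]
    have hw_int : IntervalIntegrable (fun s => 1 + |a s|) volume m d := by
      apply intervalIntegrable_const.add
      exact (ha.abs).mono_set (by rw [uIcc_of_le hcd, uIcc_of_le hmd]; exact Icc_subset_Icc hcm le_rfl)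
    set W : ℝ → ℝ := fun t => ∫ s in m..t, (1 + |a s|) with hW
    have hWcont : ContinuousOn W (Icc m d) := by
      have := continuousOn_primitive_interval' hw_int (by rw [uIcc_of_le hmd]; exact ⟨le_rfl, hmd⟩)
      rwa [uIcc_of_le hmd] at this
    have hW0 : W m = 0 := intervalIntegral.integral_same
    -- choose t₁ ∈ Ioc m d with W t₁ < 1/2
    obtain ⟨t₁, hWt₁, ht₁⟩ : ∃ t₁, W t₁ < 1/2 ∧ t₁ ∈ Ioc m d := by
      have h1 : Filter.Tendsto W (nhdsWithin m (Icc m d)) (nhds 0) := by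
        have h0 : Filter.Tendsto W (nhdsWithin m (Icc m d)) (nhds (W m)) :=
          hWcont m ⟨le_rfl, hmd⟩
        rwa [hW0] at h0
      have h2 : ∀ᶠ t in nhdsWithin m (Icc m d), W t < 1/2 :=
        h1.eventually (Filter.Tendsto.eventually_lt_const (by norm_num) Filter.tendsto_id)
      have h3 : ∀ᶠ t in nhdsWithin m (Ioc m d), W t < 1/2 :=
        h2.filter_mono (nhdsWithin_mono m Ioc_subset_Icc_self)
      have hB : (nhdsWithin m (Ioc m d)).NeBot := by
        rw [← mem_closure_iff_nhdsWithin_neBot, closure_Ioc hmd'.ne]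
        exact ⟨le_rfl, hmd⟩
      exact (h3.and (eventually_mem_nhdsWithin)).exists
    have hmt₁ : m < t₁ := ht₁.1
    have ht₁d : t₁ ≤ d := ht₁.2
    have hsub : Icc m t₁ ⊆ Icc c d := Icc_subset_Icc hcm ht₁d
    -- max of φ = |u| + |u'| on [m, t₁]
    have hφcont : ContinuousOn (fun t => |u t| + |u' t|) (Icc m t₁) :=
      ((hu_cont.mono hsub).abs.add (hu'_cont.mono hsub).abs)
    obtain ⟨z, hz_mem, hz_max⟩ := isCompact_Icc.exists_isMaxOn (nonempty_Icc.2 hmt₁.le) hφcont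
    set K := |u z| + |u' z| with hK
    have hK0 : (0:ℝ) ≤ K := by positivity
    have hφK : ∀ r ∈ Icc m t₁, |u r| ≤ K ∧ |u' r| ≤ K := by
      intro r hr
      have h := isMaxOn_iff.mp hz_max r hr
      exact ⟨by linarith [abs_nonneg (u' r)], by linarith [abs_nonneg (u r)]⟩
    -- the basic estimate
    have hest : ∀ t ∈ Icc m t₁, |u t| + |u' t| ≤ K / 2 := by
      intro t ht
      have hmt : m ≤ t := ht.1
      have htd : t ≤ d := ht.2.trans ht₁d
      have hsub2 : Icc m t ⊆ Icc c d := Icc_subset_Icc hcm htd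
      have hsub3 : uIcc m t ⊆ uIcc c d := by
        rw [uIcc_of_le hmt, uIcc_of_le hcd]; exact hsub2
      have hu'_int : IntervalIntegrable u' volume m t :=
        (hu'_cont.mono (by rwa [uIcc_of_le hmt])).intervalIntegrable
      -- u t = ∫ m..t u'
      have hu_eq : u t = ∫ s in m..t, u' s := by
        have := intervalIntegral.integral_eq_sub_of_hasDeriv_right_of_le hmt
          (hu_cont.mono hsub2)
          (fun x hx => by
            have hx' : x ∈ Icc c d := ⟨hcm.trans hx.1.le, hx.2.le.trans htd⟩
            have hmem : Icc c d ∈ nhds x :=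
              Icc_mem_nhds (lt_of_le_of_lt hcm hx.1) (lt_of_lt_of_le hx.2 htd)
            exact (((hsol.1 x hx').hasDerivAt hmem)).hasDerivWithinAt)
          hu'_int
        rw [this, hum.1, sub_zero]
      -- u' t = ∫ m..t -(a u)
      have hau_int_mt : IntervalIntegrable (fun s => -(a s * u s)) volume m t :=
        hInt_au.mono_set hsub3
      have hau_int_cm : IntervalIntegrable (fun s => -(a s * u s)) volume c m :=
        hInt_au.mono_set (by rw [uIcc_of_le hcm, uIcc_of_le hcd]; exact Icc_subset_Icc le_rfl hmd)
      have hau_int_ct : IntervalIntegrable (fun s => -(a s * u s)) volume c t :=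
        hInt_au.mono_set (by rw [uIcc_of_le (hcm.trans hmt), uIcc_of_le hcd]; exact Icc_subset_Icc le_rfl htd)
      have hu'_eq : u' t = ∫ s in m..t, -(a s * u s) := by
        have h1 := hsol.2 t ⟨hcm.trans hmt, htd⟩
        have h2 := hsol.2 m ⟨hcm, hmd⟩
        have h3 := intervalIntegral.integral_interval_sub_left hau_int_ct hau_int_cm
        have : u' t - u' m = ∫ s in m..t, -(a s * u s) := by
          rw [h1, h2]; rw [← h3]; ring
        rw [← this, hum.2, sub_zero]
      -- estimates
      have e1 : |u t| ≤ ∫ s in m..t, |u' s| := by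
        rw [hu_eq]; exact intervalIntegral.abs_integral_le_integral_abs hmt
      have e2 : |u' t| ≤ ∫ s in m..t, |a s * u s| := by
        rw [hu'_eq]
        have := intervalIntegral.abs_integral_le_integral_abs (μ := volume) (f := fun s => -(a s * u s)) hmt
        simpa [abs_neg] using this
      have hInt1 : IntervalIntegrable (fun s => |u' s|) volume m t := hu'_int.abs
      have hInt2 : IntervalIntegrable (fun s => |a s * u s|) volume m t := hau_int_mt.abs.congr ?congr1
      case congr1 =>
        intro s _; simp [abs_neg]
      have hw_int_mt : IntervalIntegrable (fun s => (1 + |a s|) * K) volume m t :=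
        (hw_int.mono_set (by rw [uIcc_of_le hmt, uIcc_of_le hmd]; exact Icc_subset_Icc le_rfl (ht.2.trans ht₁d))).mul_const K
      have e3 : (∫ s in m..t, |u' s|) + (∫ s in m..t, |a s * u s|)
          ≤ ∫ s in m..t, (1 + |a s|) * K := by
        rw [← intervalIntegral.integral_add hInt1 hInt2]
        apply intervalIntegral.integral_mono_on hmt (hInt1.add hInt2) hw_int_mt
        intro s hs
        have hs' : s ∈ Icc m t₁ := ⟨hs.1, hs.2.trans ht.2⟩
        have h1 := (hφK s hs').1
        have h2 := (hφK s hs').2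
        have : |a s * u s| ≤ |a s| * K := by
          rw [abs_mul]; exact mul_le_mul_of_nonneg_left h1 (abs_nonneg _)
        nlinarith [abs_nonneg (a s)]
      have e4 : (∫ s in m..t, (1 + |a s|) * K) ≤ K / 2 := by
        rw [intervalIntegral.integral_mul_const]
        have hWt : W t ≤ W t₁ := by
          have hw_int_tt₁ : IntervalIntegrable (fun s => 1 + |a s|) volume t t₁ :=
            hw_int.mono_set (by rw [uIcc_of_le ht.2, uIcc_of_le hmd]; exact Icc_subset_Icc hmt ht₁d)
          have hadd := intervalIntegral.integral_add_adjacent_intervals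
            (hw_int.mono_set (by rw [uIcc_of_le hmt, uIcc_of_le hmd]; exact Icc_subset_Icc le_rfl htd))
            hw_int_tt₁
          have hnn : 0 ≤ ∫ s in t..t₁, (1 + |a s|) :=
            intervalIntegral.integral_nonneg ht.2 (fun s _ => by positivity)
          simp only [hW]
          rw [← hadd]; linarith
        have hWnn : (0:ℝ) ≤ W t :=
          intervalIntegral.integral_nonneg hmt (fun s _ => by positivity)
        calc (W t) * K ≤ (1/2) * K := by
              apply mul_le_mul_of_nonneg_right _ hK0
              linarith
          _ = K / 2 := by ring
      linarith
    -- hence K = 0 and everything vanishes on [m, t₁]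
    have hKz : K ≤ K / 2 := by
      have := hest z hz_mem
      linarith
    have hK0' : K = 0 := by linarith
    have hvan : ∀ r ∈ Icc m t₁, u r = 0 ∧ u' r = 0 := by
      intro r hr
      have h1 := (hφK r hr).1
      have h2 := (hφK r hr).2
      rw [hK0'] at h1 h2
      exact ⟨abs_eq_zero.1 (le_antisymm h1 (abs_nonneg _)),
             abs_eq_zero.1 (le_antisymm h2 (abs_nonneg _))⟩
    have ht₁S : t₁ ∈ S := by
      refine ⟨⟨hx₀m.trans hmt₁.le, ht₁d⟩, fun r hr => ?_⟩
      rcases lt_or_ge r m with h | h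
      · exact hzero_lt r hr.1 h
      · exact hvan r ⟨h, hr.2⟩
    have := le_csSup hbdd ht₁S
    linarith
  intro t ht
  rcases eq_or_lt_of_le ht.2 with h | h
  · rw [h, ← hmeqd]; exact hum
  · exact hzero_lt t ht.1 (by rw [hmeqd]; exact h)

end helpers

private lemma key (T : ℝ) (a : ℝ → ℝ) (G Gle Gri : ℝ → ℝ → ℝ)
    (ha : IntervalIntegrable a volume 0 T)
    (hsym : ∀ t ∈ Icc (0:ℝ) T, ∀ s ∈ Icc (0:ℝ) T, G t s = G s t)
    (hsign : (∀ t ∈ Icc (0:ℝ) T, ∀ s ∈ Icc (0:ℝ) T, 0 ≤ G t s) ∨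
             (∀ t ∈ Icc (0:ℝ) T, ∀ s ∈ Icc (0:ℝ) T, G t s ≤ 0))
    (hleft : ∀ s ∈ Icc (0:ℝ) T, IsSolPiece a 0 s (fun t => G t s) (fun t => Gle t s))
    (hright : ∀ s ∈ Icc (0:ℝ) T, IsSolPiece a s T (fun t => G t s) (fun t => Gri t s))
    (hjump : ∀ s ∈ Ioo (0:ℝ) T, Gri s s - Gle s s = 1)
    (t₀ s₀ : ℝ) (ht₀ : t₀ ∈ Ioo (0:ℝ) T) (hs₀ : s₀ ∈ Ioo (0:ℝ) T)
    (hlt : t₀ < s₀) (hzero : G t₀ s₀ = 0) : False := by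
  have hT : (0:ℝ) < T := ht₀.1.trans ht₀.2
  have haCD : ∀ c d : ℝ, c ∈ Icc (0:ℝ) T → d ∈ Icc (0:ℝ) T → IntervalIntegrable a volume c d := by
    intro c d hc hd
    refine ha.mono_set (uIcc_subset_uIcc ?_ ?_) <;> rw [uIcc_of_le hT.le]
    exacts [hc, hd]
  have ht₀I : t₀ ∈ Icc (0:ℝ) T := ⟨ht₀.1.le, ht₀.2.le⟩
  have hs₀I : s₀ ∈ Icc (0:ℝ) T := ⟨hs₀.1.le, hs₀.2.le⟩
  have hsgn_col : ∀ s ∈ Icc (0:ℝ) T,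
      (∀ t ∈ Icc (0:ℝ) T, 0 ≤ G t s) ∨ (∀ t ∈ Icc (0:ℝ) T, G t s ≤ 0) := by
    intro s hs
    exact hsign.imp (fun h t ht => h t ht s hs) (fun h t ht => h t ht s hs)
  -- C1 : column s₀ vanishes on [t₀, s₀]
  have C1 : ∀ t ∈ Icc t₀ s₀, G t s₀ = 0 ∧ Gle t s₀ = 0 := by
    have hL := hleft s₀ hs₀I
    have hd : HasDerivAt (fun t => G t s₀) (Gle t₀ s₀) t₀ :=
      (hL.1 t₀ ⟨ht₀.1.le, hlt.le⟩).hasDerivAt (Icc_mem_nhds ht₀.1 hlt)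
    have hGle0 : Gle t₀ s₀ = 0 :=
      deriv_zero_of_sign ht₀ (hsgn_col s₀ hs₀I) hzero hd
    exact fv (haCD 0 s₀ ⟨le_rfl, hT.le⟩ hs₀I) hL ⟨ht₀.1.le, hlt.le⟩ hzero hGle0
  -- C2 : for c ∈ (t₀, s₀), column c vanishes on [s₀, T]
  have C2 : ∀ c ∈ Ioo t₀ s₀, ∀ t ∈ Icc s₀ T, G t c = 0 ∧ Gri t c = 0 := by
    intro c hc
    have hcI : c ∈ Icc (0:ℝ) T := ⟨(ht₀.1.trans hc.1).le, (hc.2.trans hs₀.2).le⟩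
    have hz : G s₀ c = 0 := by
      rw [hsym s₀ hs₀I c hcI]
      exact (C1 c ⟨hc.1.le, hc.2.le⟩).1
    have hR := hright c hcI
    have hd : HasDerivAt (fun t => G t c) (Gri s₀ c) s₀ :=
      (hR.1 s₀ ⟨hc.2.le, hs₀.2.le⟩).hasDerivAt (Icc_mem_nhds hc.2 hs₀.2)
    have hGri0 : Gri s₀ c = 0 :=
      deriv_zero_of_sign hs₀ (hsgn_col c hcI) hz hd
    exact fv (haCD c T hcI ⟨hT.le, le_rfl⟩) hR ⟨hc.2.le, hs₀.2.le⟩ hz hGri0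
  set c₁ : ℝ := (t₀ + s₀) / 2 with hc₁def
  have hc₁ : c₁ ∈ Ioo t₀ s₀ := ⟨by simp only [hc₁def]; linarith, by simp only [hc₁def]; linarith⟩
  have hc₁I : c₁ ∈ Icc (0:ℝ) T := ⟨(ht₀.1.trans hc₁.1).le, (hc₁.2.trans hs₀.2).le⟩
  -- C3 : for s ∈ (s₀, T), column s vanishes on [c₁, s]
  have C3 : ∀ s ∈ Ioo s₀ T, ∀ t ∈ Icc c₁ s, G t s = 0 ∧ Gle t s = 0 := by
    intro s hs
    have hsI : s ∈ Icc (0:ℝ) T := ⟨(hs₀.1.trans hs.1).le, hs.2.le⟩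
    have hz : G c₁ s = 0 := by
      rw [hsym c₁ hc₁I s hsI]
      exact (C2 c₁ hc₁ s ⟨hs.1.le, hs.2.le⟩).1
    have hL := hleft s hsI
    have hc₁s : c₁ < s := hc₁.2.trans hs.1
    have h0c₁ : (0:ℝ) < c₁ := ht₀.1.trans hc₁.1
    have hd : HasDerivAt (fun t => G t s) (Gle c₁ s) c₁ :=
      (hL.1 c₁ ⟨h0c₁.le, hc₁s.le⟩).hasDerivAt (Icc_mem_nhds h0c₁ hc₁s)
    have hGle0 : Gle c₁ s = 0 :=
      deriv_zero_of_sign ⟨h0c₁, hc₁.2.trans hs₀.2⟩ (hsgn_col s hsI) hz hd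
    exact fv (haCD 0 s ⟨le_rfl, hT.le⟩ hsI) hL ⟨h0c₁.le, hc₁s.le⟩ hz hGle0
  -- C4 : G vanishes on (s₀,T) × (s₀,T) above the diagonal
  have C4 : ∀ s ∈ Ioo s₀ T, ∀ t ∈ Ioo s T, G t s = 0 := by
    intro s hs t ht
    have hsI : s ∈ Icc (0:ℝ) T := ⟨(hs₀.1.trans hs.1).le, hs.2.le⟩
    have htI : t ∈ Icc (0:ℝ) T := ⟨(hs₀.1.trans (hs.1.trans ht.1)).le, ht.2.le⟩
    rw [hsym t htI s hsI]
    exact (C3 t ⟨hs.1.trans ht.1, ht.2⟩ s ⟨(hc₁.2.trans hs.1).le, ht.1.le⟩).1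
  -- conclusion at s := (s₀ + T)/2
  set s : ℝ := (s₀ + T) / 2 with hsdef
  have hs : s ∈ Ioo s₀ T := ⟨by simp only [hsdef]; linarith [hs₀.2], by simp only [hsdef]; linarith [hs₀.2]⟩
  have hsI : s ∈ Icc (0:ℝ) T := ⟨(hs₀.1.trans hs.1).le, hs.2.le⟩
  have hc₁s : c₁ ≤ s := (hc₁.2.trans hs.1).le
  have hGle : Gle s s = 0 := (C3 s hs s ⟨hc₁s, le_rfl⟩).2
  set t' : ℝ := (s + T) / 2 with ht'def
  have hst' : s < t' := by simp only [ht'def]; linarith [hs.2]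
  have ht'T : t' < T := by simp only [ht'def]; linarith [hs.2]
  have hR := hright s hsI
  have h1 : HasDerivWithinAt (fun t => G t s) (Gri s s) (Icc s t') s :=
    (hR.1 s ⟨le_rfl, hs.2.le⟩).mono (Icc_subset_Icc le_rfl ht'T.le)
  have hzt' : ∀ x ∈ Icc s t', G x s = 0 := by
    intro x hx
    rcases eq_or_lt_of_le hx.1 with h | h
    · rw [← h]; exact (C3 s hs s ⟨hc₁s, le_rfl⟩).1
    · exact C4 s hs x ⟨h, lt_of_le_of_lt hx.2 ht'T⟩
  have h2 : HasDerivWithinAt (fun t => G t s) (0:ℝ) (Icc s t') s := by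
    have := hasDerivWithinAt_const s (Icc s t') (0:ℝ)
    exact this.congr hzt' (hzt' s ⟨le_rfl, hst'.le⟩)
  have hud : UniqueDiffWithinAt ℝ (Icc s t') s :=
    uniqueDiffOn_Icc hst' s ⟨le_rfl, hst'.le⟩
  have hGri : Gri s s = 0 := by
    rw [← h1.derivWithin hud, h2.derivWithin hud]
  have hj := hjump s ⟨hs₀.1.trans hs.1, hs.2⟩
  rw [hGri, hGle] at hj
  norm_num at hj

/-- an interior zero of a continuous, symmetric, one-signed Green's
function (solving `u'' + a u = 0` on each side of the diagonal, with unit jump of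
`∂G/∂t` across it) must lie on the diagonal or on the boundary of `[0,T]²`. -/
theorem statement12 (T : ℝ) (hT : 0 < T) (a : ℝ → ℝ) (G Gle Gri : ℝ → ℝ → ℝ)
    (ha : IntervalIntegrable a volume 0 T)
    (hcont : ContinuousOn (fun p : ℝ × ℝ => G p.1 p.2) (Icc (0:ℝ) T ×ˢ Icc (0:ℝ) T))
    (hsym : ∀ t ∈ Icc (0:ℝ) T, ∀ s ∈ Icc (0:ℝ) T, G t s = G s t)
    (hsign : (∀ t ∈ Icc (0:ℝ) T, ∀ s ∈ Icc (0:ℝ) T, 0 ≤ G t s) ∨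
             (∀ t ∈ Icc (0:ℝ) T, ∀ s ∈ Icc (0:ℝ) T, G t s ≤ 0))
    (hleft : ∀ s ∈ Icc (0:ℝ) T, IsSolPiece a 0 s (fun t => G t s) (fun t => Gle t s))
    (hright : ∀ s ∈ Icc (0:ℝ) T, IsSolPiece a s T (fun t => G t s) (fun t => Gri t s))
    (hjump : ∀ s ∈ Ioo (0:ℝ) T, Gri s s - Gle s s = 1)
    (t₀ s₀ : ℝ) (ht₀ : t₀ ∈ Icc (0:ℝ) T) (hs₀ : s₀ ∈ Icc (0:ℝ) T)
    (hzero : G t₀ s₀ = 0) :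
    t₀ = s₀ ∨ t₀ = 0 ∨ t₀ = T ∨ s₀ = 0 ∨ s₀ = T := by
  by_contra hcon
  push_neg at hcon
  obtain ⟨hne, ht0, htT, hs0, hsT⟩ := hcon
  have ht₀' : t₀ ∈ Ioo (0:ℝ) T := ⟨ht₀.1.lt_of_ne (Ne.symm ht0), ht₀.2.lt_of_ne htT⟩
  have hs₀' : s₀ ∈ Ioo (0:ℝ) T := ⟨hs₀.1.lt_of_ne (Ne.symm hs0), hs₀.2.lt_of_ne hsT⟩
  rcases lt_or_gt_of_ne hne with hlt | hgt
  · exact key T a G Gle Gri ha hsym hsign hleft hright hjump t₀ s₀ ht₀' hs₀' hlt hzero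
  · refine key T a G Gle Gri ha hsym hsign hleft hright hjump s₀ t₀ hs₀' ht₀' hgt ?_
    rw [← hsym t₀ ht₀ s₀ hs₀]
    exact hzero
end

section
/- Fix T > 0 and m with 0 < mT < π/2. Define on [0,T]² the constant-coefficient Green's functions G_N(t,s) = cos(m·min(t,s))·cos(m·(T−max(t,s)))/(m·sin(mT)) and G_D(t,s) = sin(m·min(t,s))·sin(m·(max(t,s)−T))/(m·sin(mT)). Then G_N(t,s) ≥ −G_D(t,s) ≥ 0 for all (t,s) ∈ [0,T]×[0,T]. -/
open Set MeasureTheory intervalIntegral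

/-- The constant-coefficient Neumann Green's function (min/max form). -/
noncomputable def GNm (T m : ℝ) : ℝ → ℝ → ℝ := fun t s =>
  Real.cos (m * min t s) * Real.cos (m * (T - max t s)) / (m * Real.sin (m * T))

/-- The constant-coefficient Dirichlet Green's function (min/max form). -/
noncomputable def GDm (T m : ℝ) : ℝ → ℝ → ℝ := fun t s =>
  Real.sin (m * min t s) * Real.sin (m * (max t s - T)) / (m * Real.sin (m * T))

/-- for `0 < mT < π/2` the comparison `G_N ≥ −G_D ≥ 0` holds on
`[0,T]²`. -/
theorem statement15 (T m : ℝ) (hT : 0 < T) (hm : 0 < m)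
    (hmT : m * T < Real.pi / 2) :
    ∀ t ∈ Icc (0:ℝ) T, ∀ s ∈ Icc (0:ℝ) T,
      GNm T m t s ≥ -GDm T m t s ∧ -GDm T m t s ≥ 0 := by
  intro t ht s hs
  have hpi := Real.pi_pos
  have hsin : 0 < Real.sin (m * T) :=
    Real.sin_pos_of_pos_of_lt_pi (by positivity) (by linarith)
  have hden : 0 < m * Real.sin (m * T) := by positivity
  set a := m * min t s with ha_def
  set b := m * (T - max t s) with hb_def
  have hmin : 0 ≤ min t s := le_min ht.1 hs.1
  have hmax : max t s ≤ T := max_le ht.2 hs.2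
  have hminmax : min t s ≤ max t s := min_le_max
  have ha : 0 ≤ a := mul_nonneg hm.le hmin
  have hb : 0 ≤ b := mul_nonneg hm.le (by linarith)
  have hab : a + b ≤ m * T := by
    have : a + b = m * (T - (max t s - min t s)) := by ring
    rw [this]
    have : T - (max t s - min t s) ≤ T := by linarith
    nlinarith
  have hsa : 0 ≤ Real.sin a := Real.sin_nonneg_of_nonneg_of_le_pi ha (by linarith)
  have hsb : 0 ≤ Real.sin b := Real.sin_nonneg_of_nonneg_of_le_pi hb (by linarith)
  have hcab : 0 ≤ Real.cos (a + b) :=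
    Real.cos_nonneg_of_mem_Icc ⟨by linarith, by linarith⟩
  have hGD : -GDm T m t s = Real.sin a * Real.sin b / (m * Real.sin (m * T)) := by
    have : m * (max t s - T) = -b := by rw [hb_def]; ring
    simp [GDm, this, Real.sin_neg, neg_div, ← ha_def]
  constructor
  · rw [hGD]
    show _ ≥ _
    have hnum : Real.sin a * Real.sin b ≤ Real.cos a * Real.cos b := by
      have := Real.cos_add a b
      nlinarith
    have : Real.cos a * Real.cos b / (m * Real.sin (m * T)) = GNm T m t s := by
      simp [GNm, ← ha_def, ← hb_def]
    rw [ge_iff_le, ← this]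
    gcongr
  · rw [hGD]
    positivity
end
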